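/- For d ≥ 3, the constant K_Nem(d,∞) := inf_{q ≥ 2} (q-1) d^{2/q} satisfies K_Nem(d,∞) ≤ 2e log d − e, and for all d ≥ 1, K_Nem(d,∞) ≥ 2e log d − 3e. -/

import Mathlib

/-- K_Nem(d,∞) = inf_{q ≥ 2} (q-1) d^{2/q}. -/
noncomputable def KNemInf (d : ℕ) : ℝ :=
  sInf ((fun q : ℝ => (q - 1) * (d : ℝ) ^ (2 / q)) '' Set.Ici 2)

lemma key_low (L : ℝ) (hL : 0 ≤ L) (q : ℝ) (hq : 2 ≤ q) :
    2 * Real.exp 1 * L - 3 * Real.exp 1 ≤ (q - 1) * Real.exp (2 * L / q) := by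
  set E := Real.exp 1 with hE
  have hE1 : 2.71 < E := by
    have := Real.exp_one_gt_d9
    norm_num at this ⊢
    linarith
  have hq0 : (0 : ℝ) < q := by linarith
  set x := 2 * L / q with hx
  have hx0 : 0 ≤ x := by positivity
  have hqx : q * x = 2 * L := by
    rw [hx]; field_simp
  have hxL : x ≤ L := by
    rw [hx, div_le_iff₀ hq0]; nlinarith
  rcases eq_or_lt_of_le hx0 with h0 | hpos
  · -- x = 0, so L = 0
    have hx00 : x = 0 := h0.symm
    have hL0 : L = 0 := by nlinarith
    rw [hx00, hL0]
    simp only [Real.exp_zero, mul_one]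
    have : 0 < E := Real.exp_pos 1
    nlinarith
  · -- x > 0
    have hexpos : 0 < Real.exp x := Real.exp_pos x
    have hE0 : (0:ℝ) < E := Real.exp_pos 1
    rw [← sub_nonneg]
    have hkey : x * (2 * E * L - 3 * E) ≤ (2 * L - x) * Real.exp x := by
      rcases le_or_gt x 3 with hx3 | hx3
      · have h1 : E * x ≤ Real.exp x := by
          have h := Real.add_one_le_exp (x - 1)
          have hx1 : Real.exp x = Real.exp (x - 1) * E := by
            rw [hE, ← Real.exp_add]; ring_nf
          rw [hx1]
          nlinarith [Real.exp_pos (x - 1)]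
        nlinarith [mul_le_mul_of_nonneg_left h1 (by linarith : (0:ℝ) ≤ 2 * L - x),
          mul_nonneg (mul_nonneg hE0.le hx0) (by linarith : (0:ℝ) ≤ 3 - x)]
      · have h2 : E ^ 3 * (x - 2) ≤ Real.exp x := by
          have h := Real.add_one_le_exp (x - 3)
          have h3 : Real.exp x = Real.exp (x - 3) * E ^ 3 := by
            rw [show x = (x - 3) + 1 + 1 + 1 by ring, Real.exp_add, Real.exp_add,
              Real.exp_add, hE]
            ring
          rw [h3]
          nlinarith [Real.exp_pos (x - 3), pow_pos hE0 3]
        have hE2 : (7.34 : ℝ) ≤ E ^ 2 := by nlinarith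
        have hA : 2 * x ≤ E ^ 2 * (x - 2) := by
          nlinarith [mul_nonneg (by linarith : (0:ℝ) ≤ E ^ 2 - 7.34)
            (by linarith : (0:ℝ) ≤ x - 3)]
        have hB : x * (2 * E * L - 3 * E) ≤ L * (E ^ 3 * (x - 2)) := by
          nlinarith [mul_nonneg hE0.le (mul_nonneg hL (by linarith : (0:ℝ) ≤ E ^ 2 * (x - 2) - 2 * x)),
            mul_nonneg (mul_nonneg hE0.le hx0) (by norm_num : (0:ℝ) ≤ 3)]
        have hC : L * (E ^ 3 * (x - 2)) ≤ (2 * L - x) * (E ^ 3 * (x - 2)) := by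
          apply mul_le_mul_of_nonneg_right (by linarith)
          have : (0:ℝ) < E ^ 3 := pow_pos hE0 3
          nlinarith
        have hD := mul_le_mul_of_nonneg_left h2 (by linarith : (0:ℝ) ≤ 2 * L - x)
        linarith
    have hq1 : (q - 1) * Real.exp x - (2 * E * L - 3 * E) =
        ((2 * L - x) * Real.exp x - x * (2 * E * L - 3 * E)
          + (q * x - 2 * L) * Real.exp x) / x := by
      field_simp
      ring
    rw [hq1, hqx]
    apply div_nonneg _ (le_of_lt hpos)
    nlinarith

/-- For d ≥ 3, K_Nem(d,∞) ≤ 2e log d − e, and for all d ≥ 1,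
K_Nem(d,∞) ≥ 2e log d − 3e. -/
theorem stmt7 (d : ℕ) :
    (3 ≤ d → KNemInf d ≤ 2 * Real.exp 1 * Real.log d - Real.exp 1) ∧
      (1 ≤ d → 2 * Real.exp 1 * Real.log d - 3 * Real.exp 1 ≤ KNemInf d) := by
  have hrw : ∀ (hd0 : (0:ℝ) < (d:ℝ)) (q : ℝ),
      (d : ℝ) ^ (2 / q) = Real.exp (2 * Real.log d / q) := by
    intro hd0 q
    rw [Real.rpow_def_of_pos hd0]
    ring_nf
  constructor
  · intro hd
    have hd0 : (0:ℝ) < (d:ℝ) := by positivity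
    have hd3 : (3:ℝ) ≤ (d:ℝ) := by exact_mod_cast hd
    have hlog1 : 1 ≤ Real.log d := by
      rw [Real.le_log_iff_exp_le hd0]
      have := Real.exp_one_lt_d9
      linarith
    set q0 : ℝ := 2 * Real.log d with hq0
    have hq02 : (2:ℝ) ≤ q0 := by rw [hq0]; linarith
    have hmem : (q0 - 1) * (d : ℝ) ^ (2 / q0) ∈
        ((fun q : ℝ => (q - 1) * (d : ℝ) ^ (2 / q)) '' Set.Ici 2) :=
      ⟨q0, hq02, rfl⟩
    have hval : (q0 - 1) * (d : ℝ) ^ (2 / q0) =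
        2 * Real.exp 1 * Real.log d - Real.exp 1 := by
      rw [hrw hd0 q0]
      have hlogne : Real.log d ≠ 0 := by linarith
      have : 2 * Real.log d / q0 = 1 := by
        rw [hq0]; field_simp
      rw [this, hq0]
      ring
    have hbdd : BddBelow ((fun q : ℝ => (q - 1) * (d : ℝ) ^ (2 / q)) '' Set.Ici 2) := by
      refine ⟨0, ?_⟩
      rintro y ⟨q, hq, rfl⟩
      have hq2 : (2:ℝ) ≤ q := hq
      have : (0:ℝ) ≤ (d : ℝ) ^ (2 / q) := Real.rpow_nonneg hd0.le _
      nlinarith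
    calc KNemInf d ≤ (q0 - 1) * (d : ℝ) ^ (2 / q0) := csInf_le hbdd hmem
      _ = 2 * Real.exp 1 * Real.log d - Real.exp 1 := hval
  · intro hd
    have hd0 : (0:ℝ) < (d:ℝ) := by
      have : (1:ℝ) ≤ (d:ℝ) := by exact_mod_cast hd
      linarith
    have hL : 0 ≤ Real.log d := Real.log_nonneg (by exact_mod_cast hd)
    apply le_csInf
    · exact ⟨(2 - 1) * (d : ℝ) ^ (2 / 2), 2, Set.self_mem_Ici, rfl⟩
    · rintro y ⟨q, hq, rfl⟩
      have hq2 : (2:ℝ) ≤ q := hq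
      simp only
      rw [hrw hd0 q]
      exact key_low (Real.log d) hL q hq2
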